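/- arXiv:2010.15988 — 2 statements merged into one kernel-verified Lean document; each statement's English description precedes it below -/
import Mathlib

section
/- Let g = q₁⋯q_r be odd squarefree, d even with gcd(g,d) = q₁⋯q_s > 1. For ε₁, ε₂ ∈ {±1}, the number of residues 1 ≤ α ≤ g with Jacobi symbols (α/g) = ε₁ and ((α+d)/g) = ε₂ equals (1/4)·[|φ_d(g)| + (-1)^(r-s)·ε₁ε₂·∏_{i=1}^{s}(q_i - 1)]. -/
open Finset

private def Jsum (g d e₁ e₂ : ℕ) : ℤ :=
  ∑ a ∈ Finset.range g, jacobiSym (a : ℤ) g ^ e₁ * jacobiSym ((a : ℤ) + d) g ^ e₂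

private lemma Jsum_one (d e₁ e₂ : ℕ) : Jsum 1 d e₁ e₂ = 1 := by
  simp [Jsum, jacobiSym.one_right]

private lemma natMod_int (c m : ℕ) : ((c % m : ℕ) : ℤ) % (m : ℤ) = (c : ℤ) % m := by
  rw [Int.natCast_mod]; exact Int.emod_emod_of_dvd _ dvd_rfl

private lemma jac_mod (a m : ℕ) : jacobiSym ((a % m : ℕ) : ℤ) m = jacobiSym (a : ℤ) m :=
  jacobiSym.mod_left' (natMod_int a m)

private lemma jac_mod_add (a m : ℕ) (d : ℕ) :
    jacobiSym (((a % m : ℕ) : ℤ) + d) m = jacobiSym ((a : ℤ) + d) m :=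
  jacobiSym.mod_left' (Int.ModEq.add_right (d : ℤ) (natMod_int a m))

private lemma Jsum_mul (d e₁ e₂ : ℕ) {m n : ℕ} (h : Nat.Coprime m n) :
    Jsum (m * n) d e₁ e₂ = Jsum m d e₁ e₂ * Jsum n d e₁ e₂ := by
  rcases Nat.eq_zero_or_pos m with rfl | hm
  · simp [Jsum]
  rcases Nat.eq_zero_or_pos n with rfl | hn
  · simp [Jsum]
  haveI : NeZero m := ⟨hm.ne'⟩
  haveI : NeZero n := ⟨hn.ne'⟩
  rw [Jsum, Jsum, Jsum, Finset.sum_mul_sum, ← Finset.sum_product']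
  apply Finset.sum_nbij' (i := fun c => (c % m, c % n))
      (j := fun p => (Nat.chineseRemainder h p.1 p.2 : ℕ) % (m * n))
  · intro c hc
    simp only [Finset.mem_product, Finset.mem_range] at *
    exact ⟨Nat.mod_lt _ hm, Nat.mod_lt _ hn⟩
  · intro p hp
    simp only [Finset.mem_range]
    exact Nat.mod_lt _ (Nat.mul_pos hm hn)
  · intro c hc
    simp only [Finset.mem_range] at hc
    have h1 : (Nat.chineseRemainder h (c % m) (c % n) : ℕ) ≡ c [MOD m] :=
      (Nat.chineseRemainder h (c % m) (c % n)).2.1.trans (Nat.mod_modEq c m)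
    have h2 : (Nat.chineseRemainder h (c % m) (c % n) : ℕ) ≡ c [MOD n] :=
      (Nat.chineseRemainder h (c % m) (c % n)).2.2.trans (Nat.mod_modEq c n)
    have := (Nat.modEq_and_modEq_iff_modEq_mul h).mp ⟨h1, h2⟩
    simpa [Nat.ModEq, Nat.mod_eq_of_lt hc] using this
  · intro p hp
    simp only [Finset.mem_product, Finset.mem_range] at hp
    have h1 : (Nat.chineseRemainder h p.1 p.2 : ℕ) % m = p.1 := by
      have := (Nat.chineseRemainder h p.1 p.2).2.1
      simpa [Nat.ModEq, Nat.mod_eq_of_lt hp.1] using this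
    have h2 : (Nat.chineseRemainder h p.1 p.2 : ℕ) % n = p.2 := by
      have := (Nat.chineseRemainder h p.1 p.2).2.2
      simpa [Nat.ModEq, Nat.mod_eq_of_lt hp.2] using this
    rw [Nat.mod_mod_of_dvd _ (dvd_mul_right m n), Nat.mod_mod_of_dvd _ (dvd_mul_left n m), h1, h2]
  · intro c hc
    rw [jacobiSym.mul_right, jacobiSym.mul_right]
    rw [← jac_mod c m, ← jac_mod c n, ← jac_mod_add c m d, ← jac_mod_add c n d]
    ring

private lemma Jsum_factor (g d e₁ e₂ : ℕ) (hsf : Squarefree g) (hg0 : g ≠ 0) :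
    Jsum g d e₁ e₂ = ∏ p ∈ g.primeFactors, Jsum p d e₁ e₂ := by
  rw [Nat.multiplicative_factorization (fun n => Jsum n d e₁ e₂)
      (fun x y hxy => Jsum_mul d e₁ e₂ hxy) (Jsum_one d e₁ e₂) hg0]
  rw [Finsupp.prod, Nat.support_factorization]
  exact Finset.prod_congr rfl fun p hp => by
    rw [Nat.factorization_eq_one_of_squarefree hsf (Nat.prime_of_mem_primeFactors hp)
      (Nat.dvd_of_mem_primeFactors hp), pow_one]

-- sum over range p of a function of the cast equals sum over ZMod
private lemma sum_range_zmod {M : Type*} [AddCommMonoid M] (n : ℕ) [NeZero n] (F : ZMod n → M) :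
    ∑ a ∈ Finset.range n, F (a : ZMod n) = ∑ x : ZMod n, F x := by
  refine Finset.sum_nbij' (fun a => (a : ZMod n)) (fun x => x.val) ?_ ?_ ?_ ?_ ?_
  · intro a _; exact Finset.mem_univ _
  · intro x _; exact Finset.mem_range.mpr (ZMod.val_lt x)
  · intro a ha; exact ZMod.val_cast_of_lt (Finset.mem_range.mp ha)
  · intro x _; exact ZMod.natCast_zmod_val x
  · intro a _; rfl

private lemma jac_eq_char (p : ℕ) [Fact p.Prime] (a : ℤ) :
    jacobiSym a p = quadraticChar (ZMod p) (a : ZMod p) :=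
  ((jacobiSym.legendreSym.to_jacobiSym p a).symm : jacobiSym a p = legendreSym p a)

private lemma quad_shift (p : ℕ) [Fact p.Prime] (hp2 : p ≠ 2) {δ : ZMod p} (hδ : δ ≠ 0) :
    ∑ x : ZMod p, quadraticChar (ZMod p) x * quadraticChar (ZMod p) (x + δ) = -1 := by
  have hchar : ringChar (ZMod p) ≠ 2 := by rw [ZMod.ringChar_zmod_n]; exact hp2
  set χ := quadraticChar (ZMod p) with hχ
  have h0 : ∑ x : ZMod p, χ x * χ (x + δ) = ∑ x ∈ Finset.univ.erase 0, χ x * χ (x + δ) := by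
    rw [Finset.sum_erase _ (by simp [hχ, quadraticChar_zero])]
  rw [h0]
  have h1 : ∀ x ∈ Finset.univ.erase (0 : ZMod p), χ x * χ (x + δ) = χ (1 + δ * x⁻¹) := by
    intro x hx
    have hx0 : x ≠ 0 := Finset.mem_erase.mp hx |>.1
    have : x + δ = x * (1 + δ * x⁻¹) := by field_simp
    rw [this, map_mul, ← mul_assoc, ← pow_two, quadraticChar_sq_one hx0, one_mul]
  rw [Finset.sum_congr rfl h1]
  have h2 : ∑ x ∈ Finset.univ.erase (0 : ZMod p), χ (1 + δ * x⁻¹)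
      = ∑ y ∈ Finset.univ.erase (1 : ZMod p), χ y := by
    refine Finset.sum_nbij' (fun x => 1 + δ * x⁻¹) (fun y => δ * (y - 1)⁻¹) ?_ ?_ ?_ ?_ ?_
    · intro x hx
      have hx0 : x ≠ 0 := Finset.mem_erase.mp hx |>.1
      simp only [Finset.mem_erase, Finset.mem_univ, and_true]
      intro hc
      have : δ * x⁻¹ = 0 := by linear_combination hc
      rcases mul_eq_zero.mp this with h | h
      · exact hδ h
      · exact hx0 (inv_eq_zero.mp h)
    · intro y hy
      have hy1 : y ≠ 1 := Finset.mem_erase.mp hy |>.1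
      simp only [Finset.mem_erase, Finset.mem_univ, and_true]
      intro hc
      rcases mul_eq_zero.mp hc with h | h
      · exact hδ h
      · exact hy1 (by
          have := inv_eq_zero.mp h
          have : y = 1 := by linear_combination this
          exact this)
    · intro x hx
      have hx0 : x ≠ 0 := Finset.mem_erase.mp hx |>.1
      field_simp
      rw [add_sub_cancel_left, div_self hδ]
    · intro y hy
      have hy1 : y ≠ 1 := Finset.mem_erase.mp hy |>.1
      have : y - 1 ≠ 0 := sub_ne_zero.mpr hy1
      field_simp
      ring
    · intro x _; rfl
  rw [h2, Finset.sum_erase_eq_sub (Finset.mem_univ _), quadraticChar_sum_zero hchar, map_one]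
  ring

private lemma jac_cube (a : ℤ) (b : ℕ) : jacobiSym a b ^ 3 = jacobiSym a b := by
  rcases jacobiSym.trichotomy a b with h | h | h <;> rw [h] <;> norm_num

private lemma sum_jac_prime (p : ℕ) [Fact p.Prime] (hp2 : p ≠ 2) :
    ∑ a ∈ Finset.range p, jacobiSym (a : ℤ) p = 0 := by
  have hchar : ringChar (ZMod p) ≠ 2 := by rw [ZMod.ringChar_zmod_n]; exact hp2
  have h : ∀ a ∈ Finset.range p, jacobiSym (a : ℤ) p
      = (fun x : ZMod p => quadraticChar (ZMod p) x) ((a : ZMod p)) := by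
    intro a _
    rw [jac_eq_char, Int.cast_natCast]
  rw [Finset.sum_congr rfl h, sum_range_zmod p (fun x : ZMod p => quadraticChar (ZMod p) x),
    quadraticChar_sum_zero hchar]

private lemma jac_add_dvd (p d a : ℕ) (hpd : p ∣ d) :
    jacobiSym ((a : ℤ) + d) p = jacobiSym (a : ℤ) p := by
  obtain ⟨k, rfl⟩ := hpd
  apply jacobiSym.mod_left'
  push_cast
  rw [Int.add_mul_emod_self_left]

private lemma Jsum_prime_dvd_12 (p d : ℕ) [Fact p.Prime] (hp2 : p ≠ 2) (hpd : p ∣ d) :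
    Jsum p d 1 2 = 0 ∧ Jsum p d 2 1 = 0 := by
  constructor <;>
  · rw [Jsum, ← sum_jac_prime p hp2]
    refine Finset.sum_congr rfl fun a _ => ?_
    rw [jac_add_dvd p d a hpd, ← pow_add]
    exact jac_cube _ _

private lemma Jsum_prime_dvd_11 (p d : ℕ) [Fact p.Prime] (hp2 : p ≠ 2) (hpd : p ∣ d) :
    Jsum p d 1 1 = (p : ℤ) - 1 := by
  have h : ∀ a ∈ Finset.range p, jacobiSym (a : ℤ) p ^ 1 * jacobiSym ((a : ℤ) + d) p ^ 1
      = (fun x : ZMod p => quadraticChar (ZMod p) x ^ 2) ((a : ZMod p)) := by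
    intro a _
    rw [jac_add_dvd p d a hpd, jac_eq_char, Int.cast_natCast]
    ring
  rw [Jsum, Finset.sum_congr rfl h,
    sum_range_zmod p (fun x : ZMod p => quadraticChar (ZMod p) x ^ 2)]
  have h2 : ∀ x : ZMod p, quadraticChar (ZMod p) x ^ 2 = if x = 0 then 0 else 1 := by
    intro x
    by_cases hx : x = 0
    · subst hx; simp [quadraticChar_zero]
    · rw [if_neg hx]; exact quadraticChar_sq_one hx
  rw [Finset.sum_congr rfl fun x _ => h2 x]
  have h3 : ∀ x : ZMod p, (if x = 0 then (0:ℤ) else 1) = 1 - (if x = 0 then 1 else 0) := by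
    intro x; split <;> ring
  rw [Finset.sum_congr rfl fun x _ => h3 x, Finset.sum_sub_distrib,
    Finset.sum_ite_eq' Finset.univ (0 : ZMod p) (fun _ => (1 : ℤ))]
  simp [ZMod.card]

private lemma Jsum_prime_not_dvd_11 (p d : ℕ) [Fact p.Prime] (hp2 : p ≠ 2) (hpd : ¬ p ∣ d) :
    Jsum p d 1 1 = -1 := by
  have hδ : (d : ZMod p) ≠ 0 := fun hc => hpd ((ZMod.natCast_eq_zero_iff d p).mp hc)
  have h : ∀ a ∈ Finset.range p, jacobiSym (a : ℤ) p ^ 1 * jacobiSym ((a : ℤ) + d) p ^ 1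
      = (fun x : ZMod p => quadraticChar (ZMod p) x * quadraticChar (ZMod p) (x + (d : ZMod p)))
        ((a : ZMod p)) := by
    intro a _
    rw [jac_eq_char p ((a : ℤ) + d), jac_eq_char p (a : ℤ)]
    push_cast
    ring
  rw [Jsum, Finset.sum_congr rfl h,
    sum_range_zmod p (fun x : ZMod p => quadraticChar (ZMod p) x * quadraticChar (ZMod p) (x + (d : ZMod p))),
    quad_shift p hp2 hδ]

private lemma prime_ne_two_of_odd {g p : ℕ} (hgodd : Odd g) (hp : p ∣ g) : p ≠ 2 := by
  rintro rfl
  rw [Nat.odd_iff] at hgodd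
  omega

private lemma Jsum_11_value (g d : ℕ) (hgodd : Odd g) (hsf : Squarefree g) (hg0 : g ≠ 0) :
    Jsum g d 1 1 = (-1) ^ (g.primeFactors.card - (Nat.gcd g d).primeFactors.card)
      * ∏ q ∈ (Nat.gcd g d).primeFactors, ((q : ℤ) - 1) := by
  classical
  rw [Jsum_factor g d 1 1 hsf hg0]
  have step : ∀ p ∈ g.primeFactors, Jsum p d 1 1 = if p ∣ d then (p : ℤ) - 1 else -1 := by
    intro p hp
    haveI : Fact p.Prime := ⟨Nat.prime_of_mem_primeFactors hp⟩
    have hp2 : p ≠ 2 := prime_ne_two_of_odd hgodd (Nat.dvd_of_mem_primeFactors hp)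
    by_cases h : p ∣ d
    · rw [if_pos h]; exact Jsum_prime_dvd_11 p d hp2 h
    · rw [if_neg h]; exact Jsum_prime_not_dvd_11 p d hp2 h
  have hfil : g.primeFactors.filter (· ∣ d) = (Nat.gcd g d).primeFactors := by
    ext q
    simp only [Finset.mem_filter, Nat.mem_primeFactors]
    constructor
    · rintro ⟨⟨hq, hqg, -⟩, hqd⟩
      exact ⟨hq, Nat.dvd_gcd hqg hqd, fun hc => hg0 (Nat.eq_zero_of_gcd_eq_zero_left hc)⟩
    · rintro ⟨hq, hqgd, -⟩
      exact ⟨⟨hq, hqgd.trans (Nat.gcd_dvd_left g d), hg0⟩, hqgd.trans (Nat.gcd_dvd_right g d)⟩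
  rw [Finset.prod_congr rfl step, Finset.prod_ite, hfil, Finset.prod_const]
  have hcard : (g.primeFactors.filter (fun p => ¬ p ∣ d)).card
      = g.primeFactors.card - (Nat.gcd g d).primeFactors.card := by
    have := Finset.card_filter_add_card_filter_not (s := g.primeFactors)
      (p := (· ∣ d))
    rw [hfil] at this
    omega
  rw [hcard]
  ring

private lemma Jsum_cross_zero (g d : ℕ) (hgodd : Odd g) (hsf : Squarefree g) (hg0 : g ≠ 0)
    (hgd : 1 < Nat.gcd g d) : Jsum g d 1 2 = 0 ∧ Jsum g d 2 1 = 0 := by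
  obtain ⟨q, hq, hqdvd⟩ := Nat.exists_prime_and_dvd (n := Nat.gcd g d) (by omega)
  have hqg : q ∣ g := hqdvd.trans (Nat.gcd_dvd_left g d)
  have hqd : q ∣ d := hqdvd.trans (Nat.gcd_dvd_right g d)
  have hqmem : q ∈ g.primeFactors := Nat.mem_primeFactors.mpr ⟨hq, hqg, hg0⟩
  haveI : Fact q.Prime := ⟨hq⟩
  have hq2 : q ≠ 2 := prime_ne_two_of_odd hgodd hqg
  constructor <;> rw [Jsum_factor g d _ _ hsf hg0]
  · exact Finset.prod_eq_zero hqmem (Jsum_prime_dvd_12 q d hq2 hqd).1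
  · exact Finset.prod_eq_zero hqmem (Jsum_prime_dvd_12 q d hq2 hqd).2

private lemma sum_Icc_eq_sum_range {M : Type*} [AddCommMonoid M] (g : ℕ) (hg : 0 < g)
    (f : ℕ → M) (hf : f g = f 0) :
    ∑ a ∈ Finset.Icc 1 g, f a = ∑ a ∈ Finset.range g, f a := by
  rw [← Finset.Ico_insert_right (Nat.one_le_iff_ne_zero.mpr hg.ne'),
    Finset.sum_insert (by simp), Finset.range_eq_Ico, ← Finset.Ioo_insert_left hg,
    Finset.sum_insert (by simp), hf]
  congr 1

private lemma ind_eq (g : ℕ) [NeZero g] (d a : ℕ) :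
    (if (Nat.gcd a g = 1 ∧ Nat.gcd (a + d) g = 1) then (1 : ℤ) else 0)
      = jacobiSym (a : ℤ) g ^ 2 * jacobiSym ((a : ℤ) + d) g ^ 2 := by
  have hcast : ((a : ℤ) + d) = ((a + d : ℕ) : ℤ) := by push_cast; ring
  by_cases h1 : Nat.gcd a g = 1
  · by_cases h2 : Nat.gcd (a + d) g = 1
    · rw [if_pos ⟨h1, h2⟩, jacobiSym.sq_one (by rwa [Int.gcd_natCast_natCast]),
        hcast, jacobiSym.sq_one (by rwa [Int.gcd_natCast_natCast])]
      norm_num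
    · rw [if_neg (fun hc => h2 hc.2), hcast,
        (jacobiSym.eq_zero_iff_not_coprime (a := ((a + d : ℕ) : ℤ)) (b := g)).mpr
          (by rwa [Int.gcd_natCast_natCast])]
      ring
  · rw [if_neg (fun hc => h1 hc.1),
      (jacobiSym.eq_zero_iff_not_coprime (b := g)).mpr (by rwa [Int.gcd_natCast_natCast])]
    ring

private lemma four_ite (x y e₁ e₂ : ℤ) (hx : x = 0 ∨ x = 1 ∨ x = -1)
    (hy : y = 0 ∨ y = 1 ∨ y = -1) (he₁ : e₁ = 1 ∨ e₁ = -1) (he₂ : e₂ = 1 ∨ e₂ = -1) :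
    4 * (if (x = e₁ ∧ y = e₂) then (1 : ℤ) else 0)
      = x ^ 2 * y ^ 2 + e₂ * (x ^ 2 * y ^ 1) + e₁ * (x ^ 1 * y ^ 2) + e₁ * e₂ * (x ^ 1 * y ^ 1) := by
  rcases hx with rfl | rfl | rfl <;> rcases hy with rfl | rfl | rfl <;>
    rcases he₁ with rfl | rfl <;> rcases he₂ with rfl | rfl <;> norm_num

theorem stmt_6 (g d : ℕ) (hgodd : Odd g) (hgsf : Squarefree g)
    (hd : 0 < d) (hde : Even d) (hgd : 1 < Nat.gcd g d)
    (ε₁ ε₂ : ℤ) (hε₁ : ε₁ = 1 ∨ ε₁ = -1) (hε₂ : ε₂ = 1 ∨ ε₂ = -1) :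
    4 * (((Finset.Icc 1 g).filter
        (fun α : ℕ => jacobiSym (α : ℤ) g = ε₁ ∧ jacobiSym ((α : ℤ) + d) g = ε₂)).card : ℤ)
      = (((Finset.Icc 1 g).filter
          (fun α => Nat.gcd α g = 1 ∧ Nat.gcd (α + d) g = 1)).card : ℤ)
        + (-1) ^ (g.primeFactors.card - (Nat.gcd g d).primeFactors.card) *
            ε₁ * ε₂ * ∏ q ∈ (Nat.gcd g d).primeFactors, ((q : ℤ) - 1) := by
  classical
  have hg0 : g ≠ 0 := by rintro rfl; rw [Nat.odd_iff] at hgodd; omega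
  haveI : NeZero g := ⟨hg0⟩
  have hg1 : 0 < g := Nat.pos_of_ne_zero hg0
  have hg2 : 1 < g := lt_of_lt_of_le hgd (Nat.gcd_le_left d hg1)
  set f₁ : ℕ → ℤ :=
    fun a => if (jacobiSym (a : ℤ) g = ε₁ ∧ jacobiSym ((a : ℤ) + d) g = ε₂) then 1 else 0
    with hf₁
  set f₂ : ℕ → ℤ :=
    fun a => if (Nat.gcd a g = 1 ∧ Nat.gcd (a + d) g = 1) then 1 else 0 with hf₂
  have hb1 : f₁ g = f₁ 0 := by
    have j1 : jacobiSym ((g : ℤ)) g = jacobiSym ((0 : ℤ)) g :=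
      jacobiSym.mod_left' (by simp)
    have j2 : jacobiSym ((g : ℤ) + d) g = jacobiSym ((0 : ℤ) + d) g :=
      jacobiSym.mod_left' (Int.ModEq.add_right _ (show (g:ℤ) % g = (0:ℤ) % g by rw [Int.emod_self, Int.zero_emod]))
    simp only [hf₁, Nat.cast_zero, j1, j2]
  have hb2 : f₂ g = f₂ 0 := by
    have h01 : Nat.gcd g g ≠ 1 := by rw [Nat.gcd_self]; omega
    have h02 : Nat.gcd 0 g ≠ 1 := by rw [Nat.gcd_zero_left]; omega
    simp only [hf₂]
    rw [if_neg (fun hc => h01 hc.1), if_neg (fun hc => h02 hc.1)]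
  have hcard1 : (((Finset.Icc 1 g).filter
      (fun α : ℕ => jacobiSym (α : ℤ) g = ε₁ ∧ jacobiSym ((α : ℤ) + d) g = ε₂)).card : ℤ)
      = ∑ a ∈ Finset.range g, f₁ a := by
    rw [Finset.card_filter]
    push_cast
    exact sum_Icc_eq_sum_range g hg1 f₁ hb1
  have hcard2 : (((Finset.Icc 1 g).filter
      (fun α => Nat.gcd α g = 1 ∧ Nat.gcd (α + d) g = 1)).card : ℤ)
      = ∑ a ∈ Finset.range g, f₂ a := by
    rw [Finset.card_filter]
    push_cast
    exact sum_Icc_eq_sum_range g hg1 f₂ hb2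
  have key : ∀ a ∈ Finset.range g, 4 * f₁ a
      = f₂ a + ε₂ * (jacobiSym (a : ℤ) g ^ 2 * jacobiSym ((a : ℤ) + d) g ^ 1)
        + ε₁ * (jacobiSym (a : ℤ) g ^ 1 * jacobiSym ((a : ℤ) + d) g ^ 2)
        + ε₁ * ε₂ * (jacobiSym (a : ℤ) g ^ 1 * jacobiSym ((a : ℤ) + d) g ^ 1) := by
    intro a _
    simp only [hf₁, hf₂]
    rw [ind_eq g d a]
    exact four_ite _ _ _ _ (jacobiSym.trichotomy _ _) (jacobiSym.trichotomy _ _) hε₁ hε₂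
  rw [hcard1, hcard2, Finset.mul_sum, Finset.sum_congr rfl key]
  rw [Finset.sum_add_distrib, Finset.sum_add_distrib, Finset.sum_add_distrib,
    ← Finset.mul_sum, ← Finset.mul_sum, ← Finset.mul_sum]
  have e21 : ∑ a ∈ Finset.range g,
      jacobiSym (a : ℤ) g ^ 2 * jacobiSym ((a : ℤ) + d) g ^ 1 = Jsum g d 2 1 := rfl
  have e12 : ∑ a ∈ Finset.range g,
      jacobiSym (a : ℤ) g ^ 1 * jacobiSym ((a : ℤ) + d) g ^ 2 = Jsum g d 1 2 := rfl
  have e11 : ∑ a ∈ Finset.range g,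
      jacobiSym (a : ℤ) g ^ 1 * jacobiSym ((a : ℤ) + d) g ^ 1 = Jsum g d 1 1 := rfl
  rw [e21, e12, e11]
  obtain ⟨h12, h21⟩ := Jsum_cross_zero g d hgodd hgsf hg0 hgd
  rw [h12, h21, Jsum_11_value g d hgodd hgsf hg0]
  ring
end

section
/- Let g be odd squarefree and d even. Then |Φ_{1,1}(g,d)| = 0 if and only if: (g = 5 and d ≡ 1 or 4 mod 5), or (g does not divide d but g divides 3d). -/
lemma glue_jac (m n : ℕ) (hm : m ≠ 0) (hn : n ≠ 0) (hco : Nat.Coprime m n) (a b D : ℤ) :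
    ∃ α : ℤ, jacobiSym α (m*n) = jacobiSym a m * jacobiSym b n ∧
      jacobiSym (α + D) (m*n) = jacobiSym (a + D) m * jacobiSym (b + D) n := by
  have hcoZ : IsCoprime (m:ℤ) (n:ℤ) := Int.isCoprime_iff_gcd_eq_one.mpr (by
    simpa [Int.gcd] using hco)
  obtain ⟨u, v, huv⟩ := hcoZ
  set α : ℤ := b*(u*m) + a*(v*n) with hα
  have hma : α ≡ a [ZMOD (m:ℤ)] :=
    (Int.modEq_iff_dvd.mpr ⟨u*(a-b), by linear_combination (-a) * huv⟩).symm.symm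
  have hnb : α ≡ b [ZMOD (n:ℤ)] :=
    (Int.modEq_iff_dvd.mpr ⟨v*(b-a), by linear_combination (-b) * huv⟩).symm.symm
  refine ⟨α, ?_, ?_⟩
  · rw [jacobiSym.mul_right' _ hm hn, jacobiSym.mod_left' hma, jacobiSym.mod_left' hnb]
  · rw [jacobiSym.mul_right' _ hm hn, jacobiSym.mod_left' (hma.add_right D),
      jacobiSym.mod_left' (hnb.add_right D)]


open jacobiSym in
lemma jacP {p : ℕ} [Fact p.Prime] (a : ℤ) : jacobiSym a p = legendreSym p a :=
  (jacobiSym.legendreSym.to_jacobiSym p a).symm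

instance f3 : Fact (Nat.Prime 3) := ⟨by norm_num⟩
instance f5 : Fact (Nat.Prime 5) := ⟨by norm_num⟩

lemma jacval {p : ℕ} [Fact p.Prime] {a r : ℤ} (h : a % (p:ℤ) = r) :
    jacobiSym a p = jacobiSym r p := by rw [jacobiSym.mod_left, h]

lemma jac3_1 : jacobiSym 1 3 = 1 := jacobiSym.one_left 3
lemma jac3_2 : jacobiSym 2 3 = -1 := by
  rw [jacP, legendreSym.eq_neg_one_iff]; show ¬IsSquare ((2:ℤ) : ZMod 3); decide
lemma jac3_0 : jacobiSym 0 3 = 0 := jacobiSym.zero_left (by norm_num)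
lemma jac5_0 : jacobiSym 0 5 = 0 := jacobiSym.zero_left (by norm_num)
lemma jac5_1 : jacobiSym 1 5 = 1 := jacobiSym.one_left 5
lemma jac5_2 : jacobiSym 2 5 = -1 := by
  rw [jacP, legendreSym.eq_neg_one_iff]; show ¬IsSquare ((2:ℤ) : ZMod 5); decide
lemma jac5_3 : jacobiSym 3 5 = -1 := by
  rw [jacP, legendreSym.eq_neg_one_iff]; show ¬IsSquare ((3:ℤ) : ZMod 5); decide
lemma jac5_4 : jacobiSym 4 5 = 1 := by
  rw [jacP, legendreSym.eq_one_iff 5 (by decide)]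
  show IsSquare ((4:ℤ) : ZMod 5); decide





lemma natcast_ne_zero_of_prime (p : ℕ) [hp : Fact p.Prime] (n : ℕ) (hn : ¬ p ∣ n) :
    ((n : ℕ) : ZMod p) ≠ 0 := by
  rw [Ne, ZMod.natCast_eq_zero_iff]; exact hn

lemma jac_eq_one_of_sq (p : ℕ) [Fact p.Prime] (a : ℤ) (x : ZMod p) (hx : x ≠ 0)
    (h : (a : ZMod p) = x^2) : jacobiSym a p = 1 := by
  rw [jacP, legendreSym.eq_one_iff p (by rw [h]; exact pow_ne_zero 2 hx)]
  exact ⟨x, by rw [h]; ring⟩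

lemma aux5 : ∀ (Dk : ZMod 5), Dk ≠ 0 → ¬IsSquare Dk →
    ∃ u : ZMod 5, u ≠ 0 ∧ u^2 ≠ Dk ∧ u^2 ≠ -Dk := by decide

-- square trick: both symbols 1 at a prime
lemma PP_prime (p : ℕ) [hp : Fact p.Prime] (hp2 : p ≠ 2) (hp3 : p ≠ 3) (D : ℤ)
    (hD : (D : ZMod p) ≠ 0) (h5 : p = 5 → ¬ IsSquare (D : ZMod p)) :
    ∃ a : ℤ, jacobiSym a p = 1 ∧ jacobiSym (a + D) p = 1 := by
  haveI : NeZero p := ⟨hp.1.ne_zero⟩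
  have hpd2 : ¬ p ∣ 2 := fun h => hp2 ((Nat.prime_dvd_prime_iff_eq hp.1 Nat.prime_two).mp h)
  have hK2 : (2 : ZMod p) ≠ 0 := by
    have := natcast_ne_zero_of_prime p 2 hpd2; push_cast at this; exact this
  -- find u with u ≠ 0, u^2 ≠ D, u^2 ≠ -D
  have hu : ∃ u : ZMod p, u ≠ 0 ∧ u^2 ≠ (D : ZMod p) ∧ u^2 ≠ -(D : ZMod p) := by
    by_cases hp5 : p = 5
    · subst hp5
      exact aux5 (D : ZMod 5) hD (h5 rfl)
    · by_contra hcon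
      push_neg at hcon
      have hnd : ∀ n : ℕ, 0 < n → n < p → ((n:ℕ) : ZMod p) ≠ 0 := by
        intro n h1 h2
        exact natcast_ne_zero_of_prime p n (Nat.not_dvd_of_pos_of_lt h1 h2)
      have hp7 : 7 ≤ p := by
        have hpp := hp.1
        rcases Nat.lt_or_ge p 7 with h | h
        · interval_cases p <;> first | omega | (exfalso; revert hpp; decide)
        · exact h
      have h1 := hcon 1 one_ne_zero
      have h2 := hcon 2 hK2
      have h3 := hcon 3 (by
        have := hnd 3 (by norm_num) (by omega); push_cast at this; exact this)
      have e1 : (1 : ZMod p) = (D : ZMod p) ∨ (1 : ZMod p) = -(D : ZMod p) := by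
        by_cases h : (1 : ZMod p)^2 = (D : ZMod p)
        · left; rw [← h]; ring
        · right; rw [← h1 h]; ring
      have e2 : (4 : ZMod p) = (D : ZMod p) ∨ (4 : ZMod p) = -(D : ZMod p) := by
        by_cases h : (2 : ZMod p)^2 = (D : ZMod p)
        · left; rw [← h]; ring
        · right; rw [← h2 h]; ring
      have e3 : (9 : ZMod p) = (D : ZMod p) ∨ (9 : ZMod p) = -(D : ZMod p) := by
        by_cases h : (3 : ZMod p)^2 = (D : ZMod p)
        · left; rw [← h]; ring
        · right; rw [← h3 h]; ring
      have h14 : (1 : ZMod p) ≠ (4 : ZMod p) := by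
        intro h
        apply hnd 3 (by norm_num) (by omega)
        push_cast
        linear_combination -h
      have h49 : (4 : ZMod p) ≠ (9 : ZMod p) := by
        intro h
        apply hnd 5 (by norm_num) (by omega)
        push_cast
        linear_combination -h
      have h19 : (1 : ZMod p) ≠ (9 : ZMod p) := by
        intro h
        have h8 : ((8:ℕ) : ZMod p) = 0 := by push_cast; linear_combination -h
        have : p ∣ 8 := (ZMod.natCast_eq_zero_iff 8 p).mp h8
        have h83 : (8:ℕ) = 2^3 := by norm_num
        rw [h83] at this
        exact hpd2 (hp.1.dvd_of_dvd_pow this)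
      rcases e1 with e1 | e1 <;> rcases e2 with e2 | e2 <;> rcases e3 with e3 | e3
      · exact h14 (e1.trans e2.symm)
      · exact h14 (e1.trans e2.symm)
      · exact h19 (e1.trans e3.symm)
      · exact h49 (e2.trans e3.symm)
      · exact h49 (e2.trans e3.symm)
      · exact h19 (e1.trans e3.symm)
      · exact h14 (e1.trans e2.symm)
      · exact h14 (e1.trans e2.symm)
  obtain ⟨u, hu0, huD, huD'⟩ := hu
  set x : ZMod p := ((D:ZMod p)/u - u) / 2 with hx
  set y : ZMod p := ((D:ZMod p)/u + u) / 2 with hy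
  have hxy : y^2 = x^2 + (D : ZMod p) := by
    rw [hx, hy]
    field_simp
    ring
  have hx0 : x ≠ 0 := by
    intro h
    apply huD
    rw [hx] at h
    field_simp at h
    linear_combination -h
  have hy0 : y ≠ 0 := by
    intro h
    apply huD'
    rw [hy] at h
    field_simp at h
    linear_combination h
  refine ⟨((x^2 : ZMod p)).val, ?_, ?_⟩
  · exact jac_eq_one_of_sq p _ x hx0 (by push_cast [ZMod.natCast_val, ZMod.cast_id]; rfl)
  · refine jac_eq_one_of_sq p _ y hy0 ?_
    push_cast [ZMod.natCast_val, ZMod.cast_id]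
    rw [hxy]


lemma jac_int_one (p : ℕ) [Fact p.Prime] (a : ℤ) (b : ZMod p) (hab : (a : ZMod p) = b)
    (hb0 : b ≠ 0) (hb : IsSquare b) : jacobiSym a p = 1 := by
  rw [jacP, legendreSym.eq_one_iff p (by rw [hab]; exact hb0), hab]; exact hb

lemma jac_int_neg (p : ℕ) [Fact p.Prime] (a : ℤ) (b : ZMod p) (hab : (a : ZMod p) = b)
    (hb : ¬ IsSquare b) : jacobiSym a p = -1 := by
  rw [jacP, legendreSym.eq_neg_one_iff, hab]; exact hb

lemma val_cast_int (p : ℕ) [NeZero p] (b : ZMod p) : ((b.val : ℤ) : ZMod p) = b := by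
  push_cast [ZMod.natCast_val, ZMod.cast_id]; rfl

-- (i) square followed by nonsquare
lemma consec_sq_nonsq (p : ℕ) [hp : Fact p.Prime] (hp2 : p ≠ 2) :
    ∃ b : ZMod p, b ≠ 0 ∧ b + 1 ≠ 0 ∧ IsSquare b ∧ ¬ IsSquare (b + 1) := by
  classical
  haveI : NeZero p := ⟨hp.1.ne_zero⟩
  obtain ⟨c, hc⟩ := FiniteField.exists_nonsquare
    (F := ZMod p) (by rw [ZMod.ringChar_zmod_n]; exact hp2)
  have H : ∃ m : ℕ, ¬ IsSquare ((m : ℕ) : ZMod p) :=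
    ⟨c.val, by rw [ZMod.natCast_val, ZMod.cast_id]; exact hc⟩
  set n := Nat.find H with hn
  have hnsq : ¬ IsSquare ((n : ℕ) : ZMod p) := Nat.find_spec H
  have hmin : ∀ m, m < n → IsSquare ((m : ℕ) : ZMod p) := by
    intro m hm
    by_contra hcon
    exact Nat.find_min H hm hcon
  have hn2 : 2 ≤ n := by
    rcases Nat.lt_or_ge n 2 with h | h
    · interval_cases n
      · exact absurd (by exact ⟨0, by push_cast; ring⟩) hnsq
      · exact absurd (by exact ⟨1, by push_cast; ring⟩) hnsq
    · exact h
  have hnp : n < p := by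
    have h1 : n ≤ c.val := Nat.find_min' H (by rw [ZMod.natCast_val, ZMod.cast_id]; exact hc)
    exact lt_of_le_of_lt h1 (ZMod.val_lt c)
  refine ⟨((n - 1 : ℕ) : ZMod p), ?_, ?_, ?_, ?_⟩
  · exact natcast_ne_zero_of_prime p (n-1) (Nat.not_dvd_of_pos_of_lt (by omega) (by omega))
  · rw [show (((n-1:ℕ)  : ZMod p)) + 1 = ((n:ℕ) : ZMod p) by
      push_cast [Nat.cast_sub (by omega : 1 ≤ n)]; ring]
    exact fun h => hnsq (h ▸ ⟨0, by ring⟩)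
  · exact hmin (n-1) (by omega)
  · rw [show (((n-1:ℕ)  : ZMod p)) + 1 = ((n:ℕ) : ZMod p) by
      push_cast [Nat.cast_sub (by omega : 1 ≤ n)]; ring]
    exact hnsq

lemma issq_neg_one_5 : IsSquare (-1 : ZMod 5) := by decide

-- (ii) nonsquare followed by square
lemma consec_nonsq_sq (p : ℕ) [hp : Fact p.Prime] (hp2 : p ≠ 2) (hp3 : p ≠ 3) :
    ∃ b : ZMod p, b ≠ 0 ∧ b + 1 ≠ 0 ∧ ¬ IsSquare b ∧ IsSquare (b + 1) := by
  haveI : NeZero p := ⟨hp.1.ne_zero⟩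
  by_cases hs : IsSquare (-1 : ZMod p)
  · obtain ⟨b0, hb0, hb01, hb0sq, hb0nsq⟩ := consec_sq_nonsq p hp2
    refine ⟨-b0 - 1, by intro h; apply hb01; linear_combination -h, ?_, ?_, ?_⟩
    · intro h; apply hb0; linear_combination -h
    · intro h
      apply hb0nsq
      rw [show b0 + 1 = (-1) * (-b0-1) by ring]
      exact hs.mul h
    · rw [show -b0 - 1 + 1 = (-1) * b0 by ring]
      exact hs.mul hb0sq
  · have hp5 : p ≠ 5 := by
      rintro rfl
      exact hs issq_neg_one_5
    have h5 : (5 : ZMod p) ≠ 0 := by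
      have := natcast_ne_zero_of_prime p 5
        (fun h => hp5 ((Nat.prime_dvd_prime_iff_eq hp.1 (by norm_num)).mp h))
      push_cast at this; exact this
    have h3 : (3 : ZMod p) ≠ 0 := by
      have := natcast_ne_zero_of_prime p 3
        (fun h => hp3 ((Nat.prime_dvd_prime_iff_eq hp.1 (by norm_num)).mp h))
      push_cast at this; exact this
    have h2 : (2 : ZMod p) ≠ 0 := by
      have := natcast_ne_zero_of_prime p 2
        (fun h => hp2 ((Nat.prime_dvd_prime_iff_eq hp.1 (by norm_num)).mp h))
      push_cast at this; exact this
    set s : ZMod p := 3 / 5 with hsdef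
    have hs0 : s ≠ 0 := div_ne_zero h3 h5
    refine ⟨-(s^2), by simpa using pow_ne_zero 2 hs0, ?_, ?_, ?_⟩
    · rw [show -(s^2) + 1 = (4/5 : ZMod p)^2 by rw [hsdef]; field_simp; ring]
      apply pow_ne_zero
      apply div_ne_zero _ h5
      intro h
      apply h2
      have : (2:ZMod p) * 2 = 0 := by linear_combination h
      rcases mul_eq_zero.mp this with h' | h' <;> exact h'
    · intro h
      apply hs
      have hinv : IsSquare ((s⁻¹)*(s⁻¹) : ZMod p) := ⟨s⁻¹, rfl⟩
      have := h.mul hinv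
      rwa [show -(s^2) * (s⁻¹ * s⁻¹) = -1 by field_simp] at this
    · exact ⟨4/5, by rw [hsdef]; field_simp; ring⟩

-- antidiagonal at a prime: J(a|p)=e, J(a+D|p)=-e
lemma AD_prime (p : ℕ) [hp : Fact p.Prime] (hp2 : p ≠ 2) (hp3 : p ≠ 3) (D : ℤ)
    (hD : (D : ZMod p) ≠ 0) (e : ℤ) (he : e = 1 ∨ e = -1) :
    ∃ a : ℤ, jacobiSym a p = e ∧ jacobiSym (a + D) p = -e := by
  haveI : NeZero p := ⟨hp.1.ne_zero⟩
  have hjd : legendreSym p D = 1 ∨ legendreSym p D = -1 := legendreSym.eq_one_or_neg_one p hD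
  have main : ∀ b : ZMod p, ∃ a : ℤ,
      jacobiSym a p = legendreSym p D * jacobiSym (b.val : ℤ) p ∧
      jacobiSym (a + D) p = legendreSym p D * jacobiSym ((b.val : ℤ) + 1) p := by
    intro b
    refine ⟨D * (b.val : ℤ), ?_, ?_⟩
    · rw [jacobiSym.mul_left, jacP D]
    · rw [show D * (b.val:ℤ) + D = D * ((b.val:ℤ)+1) by ring, jacobiSym.mul_left, jacP D]
  obtain ⟨b1, hb10, hb11, hb1s, hb1n⟩ := consec_sq_nonsq p hp2
  obtain ⟨b2, hb20, hb21, hb2n, hb2s⟩ := consec_nonsq_sq p hp2 hp3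
  have c1 : ∀ b : ZMod p, (((b.val : ℤ) + 1 : ℤ) : ZMod p) = b + 1 := by
    intro b; push_cast [ZMod.natCast_val, ZMod.cast_id]; rfl
  rcases he with rfl | rfl <;> rcases hjd with hj | hj
  · obtain ⟨a, ha1, ha2⟩ := main b1
    refine ⟨a, ?_, ?_⟩
    · rw [ha1, hj, jac_int_one p _ b1 (val_cast_int p b1) hb10 hb1s]; ring
    · rw [ha2, hj, jac_int_neg p _ (b1+1) (c1 b1) hb1n]; ring
  · obtain ⟨a, ha1, ha2⟩ := main b2
    refine ⟨a, ?_, ?_⟩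
    · rw [ha1, hj, jac_int_neg p _ b2 (val_cast_int p b2) hb2n]; ring
    · rw [ha2, hj, jac_int_one p _ (b2+1) (c1 b2) hb21 hb2s]; ring
  · obtain ⟨a, ha1, ha2⟩ := main b2
    refine ⟨a, ?_, ?_⟩
    · rw [ha1, hj, jac_int_neg p _ b2 (val_cast_int p b2) hb2n]; ring
    · rw [ha2, hj, jac_int_one p _ (b2+1) (c1 b2) hb21 hb2s]; ring
  · obtain ⟨a, ha1, ha2⟩ := main b1
    refine ⟨a, ?_, ?_⟩
    · rw [ha1, hj, jac_int_one p _ b1 (val_cast_int p b1) hb10 hb1s]; ring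
    · rw [ha2, hj, jac_int_neg p _ (b1+1) (c1 b1) hb1n]; ring


lemma odd_of_dvd' {m n : ℕ} (h : m ∣ n) (hn : Odd n) : Odd m := by
  rcases Nat.even_or_odd m with he | ho
  · exfalso
    rw [← Nat.not_odd_iff_even] at he
    rcases (Nat.even_or_odd n) with hen | hon
    · rw [← Nat.not_odd_iff_even] at hen; exact hen hn
    · obtain ⟨c, rfl⟩ := h
      rcases Nat.even_or_odd m with hm | hm
      · obtain ⟨k, hk⟩ := hm
        exact (Nat.not_odd_iff_even).mpr ⟨k*c, by rw [hk]; ring⟩ hn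
      · exact he hm
  · exact ho

lemma peel (v : ℕ) (hv : Squarefree v) (ho : Odd v) (h1 : v ≠ 1) :
    ∃ p w, v = p * w ∧ p.Prime ∧ p ≠ 2 ∧ Nat.Coprime p w ∧ Squarefree w ∧ Odd w ∧
      w < v ∧ w ≠ 0 ∧ p = v.minFac := by
  have hv0 : v ≠ 0 := by
    intro h; rw [h] at hv; exact (by norm_num : ¬ Squarefree (0:ℕ)) hv
  have hpp : (v.minFac).Prime := Nat.minFac_prime h1
  have hdvd : v.minFac ∣ v := Nat.minFac_dvd v
  have hvmul : v = v.minFac * (v / v.minFac) := (Nat.mul_div_cancel' hdvd).symm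
  have hsf := hvmul ▸ hv
  rw [Nat.squarefree_mul_iff] at hsf
  have hwdvd : v / v.minFac ∣ v := ⟨v.minFac, by rw [mul_comm]; exact hvmul⟩
  refine ⟨v.minFac, v / v.minFac, hvmul, hpp, ?_, hsf.1, hsf.2.2, odd_of_dvd' hwdvd ho, ?_, ?_, rfl⟩
  · intro h2
    rw [h2] at hdvd
    rcases ho with ⟨k, hk⟩
    omega
  · exact Nat.div_lt_self (Nat.pos_of_ne_zero hv0) hpp.one_lt
  · intro h
    rw [h, mul_zero] at hvmul
    exact hv0 hvmul

lemma prime_ge5 {p : ℕ} (hp : p.Prime) (h2 : p ≠ 2) (h3 : p ≠ 3) : 5 ≤ p := by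
  by_contra h
  interval_cases p <;> first | (exact h2 rfl) | (exact h3 rfl) | (revert hp; decide)













lemma exists_neg_jacobi (u : ℕ) (hu : Squarefree u) (ho : Odd u) (h1 : u ≠ 1) :
    ∃ n : ℤ, jacobiSym n u = -1 := by
  obtain ⟨p, w, huv, hpp, hp2, hco, hsw, how, hwlt, hw0, hpmin⟩ := peel u hu ho h1
  haveI : Fact p.Prime := ⟨hpp⟩
  haveI : NeZero p := ⟨hpp.ne_zero⟩
  obtain ⟨c, hc⟩ := FiniteField.exists_nonsquare
    (F := ZMod p) (by rw [ZMod.ringChar_zmod_n]; exact hp2)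
  obtain ⟨α, hα, -⟩ := glue_jac p w hpp.ne_zero hw0 hco (c.val : ℤ) 1 0
  refine ⟨α, ?_⟩
  rw [huv, hα, jac_int_neg p _ c (val_cast_int p c) hc, jacobiSym.one_left]
  ring

lemma PP_all (D : ℤ) : ∀ v : ℕ, Squarefree v → Odd v → ¬ 3 ∣ v →
    (∀ p, p.Prime → p ∣ v → ((D : ZMod p) ≠ 0)) → (5 ∣ v → ¬ IsSquare (D : ZMod 5)) →
    ∃ a : ℤ, jacobiSym a v = 1 ∧ jacobiSym (a + D) v = 1 := by
  intro v
  induction v using Nat.strong_induction_on with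
  | _ v ih =>
    intro hv ho h3 hcond h5
    by_cases h1 : v = 1
    · exact ⟨0, by rw [h1]; simp, by rw [h1]; simp⟩
    obtain ⟨p, w, huv, hpp, hp2, hco, hsw, how, hwlt, hw0, hpmin⟩ := peel v hv ho h1
    haveI : Fact p.Prime := ⟨hpp⟩
    have hpdvd : p ∣ v := huv ▸ Dvd.intro w rfl
    have hwdvd : w ∣ v := huv ▸ Dvd.intro_left p rfl
    have hp3 : p ≠ 3 := fun h => h3 (h ▸ hpdvd)
    obtain ⟨ap, hap1, hap2⟩ := PP_prime p hp2 hp3 D (hcond p hpp hpdvd)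
      (fun h => by subst h; exact h5 hpdvd)
    obtain ⟨aw, haw1, haw2⟩ := ih w hwlt hsw how (fun h => h3 (h.trans hwdvd))
      (fun q hq hqw => hcond q hq (hqw.trans hwdvd)) (fun h => h5 (h.trans hwdvd))
    obtain ⟨α, hα1, hα2⟩ := glue_jac p w hpp.ne_zero hw0 hco ap aw D
    exact ⟨α, by rw [huv, hα1, hap1, haw1]; ring, by rw [huv, hα2, hap2, haw2]; ring⟩

lemma AD_all (D : ℤ) (w : ℕ) (hw : Squarefree w) (ho : Odd w) (h3 : ¬ 3 ∣ w) (h1 : w ≠ 1)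
    (hcond : ∀ p, p.Prime → p ∣ w → ((D : ZMod p) ≠ 0)) (e : ℤ) (he : e = 1 ∨ e = -1) :
    ∃ a : ℤ, jacobiSym a w = e ∧ jacobiSym (a + D) w = -e := by
  obtain ⟨p, w', huv, hpp, hp2, hco, hsw, how, hwlt, hw0, hpmin⟩ := peel w hw ho h1
  haveI : Fact p.Prime := ⟨hpp⟩
  have hpdvd : p ∣ w := huv ▸ Dvd.intro w' rfl
  have hwdvd : w' ∣ w := huv ▸ Dvd.intro_left p rfl
  have hp3 : p ≠ 3 := fun h => h3 (h ▸ hpdvd)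
  have hp5 : 5 ≤ p := prime_ge5 hpp hp2 hp3
  obtain ⟨ap, hap1, hap2⟩ := AD_prime p hp2 hp3 D (hcond p hpp hpdvd) e he
  have h5w' : ¬ 5 ∣ w' := by
    intro h5d
    have h5w : 5 ∣ w := h5d.trans hwdvd
    have hmin : p ≤ 5 := hpmin ▸ Nat.minFac_le_of_dvd (by norm_num) h5w
    have hp5' : p = 5 := le_antisymm hmin hp5
    rw [hp5'] at hco
    have : (5:ℕ) ∣ Nat.gcd 5 w' := Nat.dvd_gcd dvd_rfl h5d
    rw [hco] at this
    omega
  obtain ⟨aw, haw1, haw2⟩ := PP_all D w' hsw how (fun h => h3 (h.trans hwdvd))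
    (fun q hq hqw => hcond q hq (hqw.trans hwdvd)) (fun h => absurd h h5w')
  obtain ⟨α, hα1, hα2⟩ := glue_jac p w' hpp.ne_zero hw0 hco ap aw D
  exact ⟨α, by rw [huv, hα1, hap1, haw1]; ring, by rw [huv, hα2, hap2, haw2]; ring⟩

lemma ns2_5 : ¬ IsSquare (((2:ℤ) : ZMod 5)) := by decide
lemma ns3_5 : ¬ IsSquare (((3:ℤ) : ZMod 5)) := by decide

lemma jac3_of_mod (a r : ℤ) (h : a % 3 = r) : jacobiSym a 3 = jacobiSym r 3 :=
  jacval (p := 3) (by exact_mod_cast h)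

lemma jac5_of_mod (a r : ℤ) (h : a % 5 = r) : jacobiSym a 5 = jacobiSym r 5 :=
  jacval (p := 5) (by exact_mod_cast h)

lemma L_main (D : ℤ) (v : ℕ) (hv : Squarefree v) (ho : Odd v)
    (hcond : ∀ p, p.Prime → p ∣ v → ((D : ZMod p) ≠ 0)) (hv3 : v ≠ 3) :
    (∃ a : ℤ, jacobiSym a v = 1 ∧ jacobiSym (a + D) v = 1) ∨
    (v = 5 ∧ (D % 5 = 1 ∨ D % 5 = 4) ∧
      ∃ a : ℤ, jacobiSym a v = -1 ∧ jacobiSym (a + D) v = -1) := by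
  have hv0 : v ≠ 0 := by
    intro h; rw [h] at hv; exact (by norm_num : ¬ Squarefree (0:ℕ)) hv
  by_cases h3 : 3 ∣ v
  · -- v = 3 * w
    left
    have huv : v = 3 * (v / 3) := (Nat.mul_div_cancel' h3).symm
    set w := v / 3 with hwdef
    have hsf := huv ▸ hv
    rw [Nat.squarefree_mul_iff] at hsf
    have hwdvd : w ∣ v := ⟨3, by rw [mul_comm]; exact huv⟩
    have hw1 : w ≠ 1 := by
      intro h; rw [h, mul_one] at huv; exact hv3 huv
    have hw0 : w ≠ 0 := by intro h; rw [h, mul_zero] at huv; exact hv0 huv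
    have h3w : ¬ 3 ∣ w := by
      intro hd
      have : (3:ℕ) ∣ Nat.gcd 3 w := Nat.dvd_gcd dvd_rfl hd
      rw [hsf.1] at this; omega
    have hD3 : ((D : ZMod 3) ≠ 0) := hcond 3 (by norm_num) h3
    have hd3 : D % 3 = 1 ∨ D % 3 = 2 := by
      rw [Ne, ZMod.intCast_zmod_eq_zero_iff_dvd] at hD3
      omega
    have key : ∃ e a3 : ℤ, (e = 1 ∨ e = -1) ∧ jacobiSym a3 3 = e ∧
        jacobiSym (a3 + D) 3 = -e := by
      rcases hd3 with h | h
      · exact ⟨1, 1, Or.inl rfl, jac3_1, by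
          rw [jac3_of_mod (1+D) 2 (by omega), jac3_2]⟩
      · exact ⟨-1, 2, Or.inr rfl, jac3_2, by
          rw [jac3_of_mod (2+D) 1 (by omega), jac3_1]; ring⟩
    obtain ⟨e, a3, he, hj1, hj2⟩ := key
    obtain ⟨aw, haw1, haw2⟩ := AD_all D w hsf.2.2 (odd_of_dvd' hwdvd ho) h3w hw1
      (fun q hq hqw => hcond q hq (hqw.trans hwdvd)) e he
    obtain ⟨α, hα1, hα2⟩ := glue_jac 3 w (by norm_num) hw0 hsf.1 a3 aw D
    have he2 : e * e = 1 := by rcases he with rfl | rfl <;> norm_num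
    refine ⟨α, ?_, ?_⟩
    · rw [huv, hα1, hj1, haw1, he2]
    · rw [huv, hα2, hj2, haw2, neg_mul_neg, he2]
  · by_cases h5 : 5 ∣ v ∧ IsSquare ((D : ZMod 5))
    · obtain ⟨h5v, hsqD⟩ := h5
      have huv : v = 5 * (v / 5) := (Nat.mul_div_cancel' h5v).symm
      set w := v / 5 with hwdef
      have hsf := huv ▸ hv
      rw [Nat.squarefree_mul_iff] at hsf
      have hwdvd : w ∣ v := ⟨5, by rw [mul_comm]; exact huv⟩
      have hw0 : w ≠ 0 := by intro h; rw [h, mul_zero] at huv; exact hv0 huv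
      have hD5 : ((D : ZMod 5) ≠ 0) := hcond 5 (by norm_num) h5v
      have hcast : ((D % 5 : ℤ) : ZMod 5) = (D : ZMod 5) := by
        rw [ZMod.intCast_eq_intCast_iff]
        exact Int.emod_emod_of_dvd D dvd_rfl
      have hd5 : D % 5 = 1 ∨ D % 5 = 4 := by
        have hr : D % 5 = 0 ∨ D % 5 = 1 ∨ D % 5 = 2 ∨ D % 5 = 3 ∨ D % 5 = 4 := by omega
        rcases hr with h | h | h | h | h
        · exfalso; apply hD5; rw [← hcast, h]; norm_num
        · exact Or.inl h
        · exfalso; apply ns2_5; rw [show ((2:ℤ):ZMod 5) = (D : ZMod 5) by rw [← hcast, h]]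
          exact hsqD
        · exfalso; apply ns3_5; rw [show ((3:ℤ):ZMod 5) = (D : ZMod 5) by rw [← hcast, h]]
          exact hsqD
        · exact Or.inr h
      by_cases hw1 : w = 1
      · right
        have hv5 : v = 5 := by rw [huv, hw1, mul_one]
        refine ⟨hv5, hd5, ?_⟩
        rcases hd5 with h | h
        · exact ⟨2, by rw [hv5, jac5_2], by
            rw [hv5, jac5_of_mod (2+D) 3 (by omega), jac5_3]⟩
        · exact ⟨3, by rw [hv5, jac5_3], by
            rw [hv5, jac5_of_mod (3+D) 2 (by omega), jac5_2]⟩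
      · left
        obtain ⟨a5, ha51, ha52⟩ := AD_prime 5 (by norm_num) (by norm_num) D hD5 1 (Or.inl rfl)
        have h3w : ¬ 3 ∣ w := fun hd => h3 (hd.trans hwdvd)
        obtain ⟨aw, haw1, haw2⟩ := AD_all D w hsf.2.2 (odd_of_dvd' hwdvd ho) h3w hw1
          (fun q hq hqw => hcond q hq (hqw.trans hwdvd)) 1 (Or.inl rfl)
        obtain ⟨α, hα1, hα2⟩ := glue_jac 5 w (by norm_num) hw0 hsf.1 a5 aw D
        refine ⟨α, ?_, ?_⟩
        · rw [huv, hα1, ha51, haw1]; norm_num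
        · rw [huv, hα2, ha52, haw2]; norm_num
    · left
      exact PP_all D v hv ho h3 hcond (fun hdvd hsq => h5 ⟨hdvd, hsq⟩)



lemma backward (g d : ℕ) (hg : 0 < g) (hgodd : Odd g) (hgsf : Squarefree g)
    (hnrhs : ¬ ((g = 5 ∧ (d % 5 = 1 ∨ d % 5 = 4)) ∨ (¬ g ∣ d ∧ g ∣ 3 * d))) :
    ∃ α : ℤ, jacobiSym α g = 1 ∧ jacobiSym (α + (d:ℤ)) g = 1 := by
  set u := Nat.gcd g d with hudef
  have hug : u ∣ g := Nat.gcd_dvd_left g d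
  have hud : u ∣ d := Nat.gcd_dvd_right g d
  have hu0 : u ≠ 0 := by
    intro h
    exact hg.ne' (Nat.eq_zero_of_gcd_eq_zero_left h)
  have hguv : g = u * (g / u) := (Nat.mul_div_cancel' hug).symm
  set v := g / u with hvdef
  have hsf := hguv ▸ hgsf
  rw [Nat.squarefree_mul_iff] at hsf
  obtain ⟨hco, hsfu, hsfv⟩ := hsf
  have hvdvd : v ∣ g := ⟨u, by rw [mul_comm]; exact hguv⟩
  have hv0 : v ≠ 0 := by intro h; rw [h, mul_zero] at hguv; exact hg.ne' hguv
  have hudZ : (u:ℤ) ∣ (d:ℤ) := Int.natCast_dvd_natCast.mpr hud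
  have hcond : ∀ p, p.Prime → p ∣ v → (((d:ℤ) : ZMod p) ≠ 0) := by
    intro p hp hpv heq
    rw [ZMod.intCast_zmod_eq_zero_iff_dvd] at heq
    have hpd : p ∣ d := by exact_mod_cast heq
    have hpu : p ∣ u := Nat.dvd_gcd (hpv.trans hvdvd) hpd
    have : p ∣ Nat.gcd u v := Nat.dvd_gcd hpu hpv
    rw [hco] at this
    exact hp.one_lt.ne' (Nat.dvd_one.mp this)
  have hv3 : v ≠ 3 := by
    intro h
    apply hnrhs
    right
    constructor
    · intro hgd
      have hgu : g ∣ u := Nat.dvd_gcd dvd_rfl hgd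
      have := Nat.dvd_antisymm hgu hug
      rw [this, h] at hguv
      omega
    · rw [hguv, h]
      rw [show u * 3 = 3 * u by ring]
      exact Nat.mul_dvd_mul_left 3 hud
  have honeu : ∀ n : ℤ, jacobiSym (n + d) u = jacobiSym n u := by
    intro n
    apply jacobiSym.mod_left'
    have h0 : (d:ℤ) ≡ 0 [ZMOD (u:ℤ)] := (Int.modEq_zero_iff_dvd).mpr hudZ
    calc n + (d:ℤ) ≡ n + 0 [ZMOD (u:ℤ)] := (Int.ModEq.refl n).add h0
      _ = n := by ring
  rcases L_main (d:ℤ) v hsfv (odd_of_dvd' hvdvd hgodd) hcond hv3 with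
    ⟨av, h1, h2⟩ | ⟨hv5, hd5, av, h1, h2⟩
  · obtain ⟨α, hα1, hα2⟩ := glue_jac u v hu0 hv0 hco 1 av (d:ℤ)
    refine ⟨α, ?_, ?_⟩
    · rw [hguv, hα1, jacobiSym.one_left, h1]; ring
    · rw [hguv, hα2, honeu 1, jacobiSym.one_left, h2]; ring
  · -- v = 5 case
    have hd5' : d % 5 = 1 ∨ d % 5 = 4 := by
      have hc : ((d % 5 : ℕ) : ℤ) = (d:ℤ) % 5 := by push_cast; ring
      omega
    have hg5 : g ≠ 5 := fun h => hnrhs (Or.inl ⟨h, hd5'⟩)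
    have hu1 : u ≠ 1 := by
      intro h
      rw [h, one_mul, hv5] at hguv
      exact hg5 hguv
    obtain ⟨n, hn⟩ := exists_neg_jacobi u hsfu (odd_of_dvd' hug hgodd) hu1
    obtain ⟨α, hα1, hα2⟩ := glue_jac u v hu0 hv0 hco n av (d:ℤ)
    refine ⟨α, ?_, ?_⟩
    · rw [hguv, hα1, hn, h1]; ring
    · rw [hguv, hα2, honeu n, hn, h2]; ring

lemma forward (g d : ℕ) (hg : 0 < g) (hgsf : Squarefree g)
    (hrhs : ((g = 5 ∧ (d % 5 = 1 ∨ d % 5 = 4)) ∨ (¬ g ∣ d ∧ g ∣ 3 * d)))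
    (α : ℤ) (h1 : jacobiSym α g = 1) (h2 : jacobiSym (α + (d:ℤ)) g = 1) : False := by
  rcases hrhs with ⟨hg5, hd5⟩ | ⟨hngd, hg3d⟩
  · subst hg5
    have hd5' : (d:ℤ) % 5 = 1 ∨ (d:ℤ) % 5 = 4 := by
      have hc : ((d % 5 : ℕ) : ℤ) = (d:ℤ) % 5 := by push_cast; ring
      omega
    have hr : α % 5 = 0 ∨ α % 5 = 1 ∨ α % 5 = 2 ∨ α % 5 = 3 ∨ α % 5 = 4 := by omega
    rcases hr with h | h | h | h | h
    · rw [jac5_of_mod α 0 h, jac5_0] at h1; norm_num at h1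
    · rcases hd5' with hd | hd
      · rw [jac5_of_mod _ 2 (by omega), jac5_2] at h2; norm_num at h2
      · rw [jac5_of_mod _ 0 (by omega), jac5_0] at h2; norm_num at h2
    · rw [jac5_of_mod α 2 h, jac5_2] at h1; norm_num at h1
    · rw [jac5_of_mod α 3 h, jac5_3] at h1; norm_num at h1
    · rcases hd5' with hd | hd
      · rw [jac5_of_mod _ 0 (by omega), jac5_0] at h2; norm_num at h2
      · rw [jac5_of_mod _ 3 (by omega), jac5_3] at h2; norm_num at h2
  · -- g ∤ d, g ∣ 3d
    have h3g : 3 ∣ g := by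
      by_contra h3g
      have hco : Nat.Coprime g 3 :=
        Nat.coprime_comm.mp ((Nat.Prime.coprime_iff_not_dvd (by norm_num)).mpr h3g)
      exact hngd (hco.dvd_of_dvd_mul_left hg3d)
    have hgm : g = 3 * (g / 3) := (Nat.mul_div_cancel' h3g).symm
    set m := g / 3 with hmdef
    have hsf := hgm ▸ hgsf
    rw [Nat.squarefree_mul_iff] at hsf
    obtain ⟨hco3m, -, -⟩ := hsf
    have hm0 : m ≠ 0 := by intro h; rw [h, mul_zero] at hgm; exact hg.ne' hgm
    have hmd : m ∣ d := by
      have : 3 * m ∣ 3 * d := by rw [← hgm]; exact hg3d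
      exact (Nat.mul_dvd_mul_iff_left (by norm_num : 0 < 3)).mp this
    have h3d : ¬ 3 ∣ d := by
      intro h3d
      exact hngd (hgm ▸ Nat.Coprime.mul_dvd_of_dvd_of_dvd hco3m h3d hmd)
    have h3dZ : ¬ (3:ℤ) ∣ (d:ℤ) := fun h => h3d (by exact_mod_cast h)
    rw [hgm, jacobiSym.mul_right' α (by norm_num) hm0] at h1
    rw [hgm, jacobiSym.mul_right' _ (by norm_num) hm0] at h2
    have hmm : jacobiSym (α + d) m = jacobiSym α m := by
      apply jacobiSym.mod_left'
      have hmdZ : (m:ℤ) ∣ (d:ℤ) := Int.natCast_dvd_natCast.mpr hmd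
      have h0 : (d:ℤ) ≡ 0 [ZMOD (m:ℤ)] := (Int.modEq_zero_iff_dvd).mpr hmdZ
      calc α + (d:ℤ) ≡ α + 0 [ZMOD (m:ℤ)] := (Int.ModEq.refl α).add h0
        _ = α := by ring
    rw [hmm] at h2
    -- now J(α|3) * J(α|m) = 1 and J(α+d|3) * J(α|m) = 1
    have hr : α % 3 = 0 ∨ α % 3 = 1 ∨ α % 3 = 2 := by omega
    rcases hr with h | h | h
    · rw [jac3_of_mod α 0 h, jac3_0] at h1; norm_num at h1
    · -- α ≡ 1, so J(α|3) = 1, J(α|m) = 1, need (α+d)%3 = 1 → 3 ∣ d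
      rw [jac3_of_mod α 1 h, jac3_1, one_mul] at h1
      have hr2 : (α + d) % 3 = 0 ∨ (α + d) % 3 = 1 ∨ (α + d) % 3 = 2 := by omega
      rcases hr2 with h' | h' | h'
      · rw [jac3_of_mod _ 0 h', jac3_0] at h2; norm_num at h2
      · exact h3dZ (by omega)
      · rw [jac3_of_mod _ 2 h', jac3_2, h1] at h2; norm_num at h2
    · rw [jac3_of_mod α 2 h, jac3_2] at h1
      have hjm : jacobiSym α m = -1 := by linarith [h1]
      have hr2 : (α + d) % 3 = 0 ∨ (α + d) % 3 = 1 ∨ (α + d) % 3 = 2 := by omega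
      rcases hr2 with h' | h' | h'
      · rw [jac3_of_mod _ 0 h', jac3_0] at h2; norm_num at h2
      · rw [jac3_of_mod _ 1 h', jac3_1, hjm] at h2; norm_num at h2
      · exact h3dZ (by omega)

lemma card_zero_iff (g d : ℕ) (hg : 0 < g) :
    (((Finset.Icc 1 g).filter
        (fun α : ℕ => jacobiSym (α : ℤ) g = 1 ∧ jacobiSym ((α : ℤ) + d) g = 1)).card = 0)
    ↔ ¬ ∃ α : ℤ, jacobiSym α g = 1 ∧ jacobiSym (α + (d:ℤ)) g = 1 := by
  rw [Finset.card_eq_zero, Finset.filter_eq_empty_iff]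
  constructor
  · rintro h ⟨β, hb1, hb2⟩
    by_cases hg1 : g = 1
    · subst hg1
      exact h (show (1:ℕ) ∈ Finset.Icc 1 1 by simp)
        ⟨jacobiSym.one_right _, jacobiSym.one_right _⟩
    · have hgZ : (0:ℤ) < (g:ℤ) := by exact_mod_cast hg
      have hr0 : 0 ≤ β % g := Int.emod_nonneg β hgZ.ne'
      have hrg : β % g < g := Int.emod_lt_of_pos β hgZ
      have hJr : jacobiSym (β % g) g = 1 := by rw [← jacobiSym.mod_left]; exact hb1
      have hrne : β % g ≠ 0 := by
        intro h0
        rw [h0, jacobiSym.zero_left (by omega)] at hJr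
        norm_num at hJr
      set a : ℕ := (β % g).toNat with hadef
      have haZ : (a:ℤ) = β % g := Int.toNat_of_nonneg hr0
      have hmem : a ∈ Finset.Icc 1 g := by
        rw [Finset.mem_Icc]
        omega
      refine h hmem ⟨by rw [haZ]; exact hJr, ?_⟩
      rw [haZ]
      have hmodeq : (β % (g:ℤ)) ≡ β [ZMOD (g:ℤ)] := Int.emod_emod_of_dvd β dvd_rfl
      rw [jacobiSym.mod_left' (hmodeq.add_right (d:ℤ))]
      exact hb2
  · rintro hne a _ ⟨ha1, ha2⟩
    exact hne ⟨(a:ℤ), ha1, ha2⟩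


theorem stmt_10 (g d : ℕ) (hg : 0 < g) (hgodd : Odd g) (hgsf : Squarefree g)
    (hd : 0 < d) (hde : Even d) :
    (((Finset.Icc 1 g).filter
        (fun α : ℕ => jacobiSym (α : ℤ) g = 1 ∧ jacobiSym ((α : ℤ) + d) g = 1)).card = 0
      ↔ ((g = 5 ∧ (d % 5 = 1 ∨ d % 5 = 4)) ∨ (¬ g ∣ d ∧ g ∣ 3 * d))) := by
  rw [card_zero_iff g d hg]
  constructor
  · intro hne
    by_contra hnrhs
    exact hne (backward g d hg hgodd hgsf hnrhs)
  · rintro hrhs ⟨α, h1, h2⟩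
    exact forward g d hg hgsf hrhs α h1 h2
end
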